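/- Let κ : ℝ × ℝ → ℝ be a bounded Borel-measurable function, let n and r be positive integers, and let x_1, ..., x_n be i.i.d. random variables uniform on [0, 1]. Define the random matrix A = (κ(x_i, x_j))_{1 ≤ i,j ≤ n}. Then E[tr(A^r)] = ∑_{l=1}^{min(r, n)} C(n, l) · J_l, where J_l = ∑_ψ ∫_{[0,1]^l} ∏_{i=1}^r κ(t_{ψ(i−1)}, t_{ψ(i)}) dt_1 ⋯ dt_l and the inner sum ranges over all surjective functions ψ : {0, 1, ..., r} → {1, ..., l} with ψ(0) = ψ(r). -/

import Mathlib

open MeasureTheory ProbabilityTheory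

lemma pow_entry {n : ℕ} (M : Matrix (Fin n) (Fin n) ℝ) :
    ∀ (r : ℕ) (i j : Fin n),
      (M ^ r) i j = ∑ f : Fin (r + 1) → Fin n,
        if f 0 = i ∧ f (Fin.last r) = j then
          ∏ k : Fin r, M (f k.castSucc) (f k.succ) else 0 := by
  intro r
  induction r with
  | zero =>
    intro i j
    have e1 : (∑ f : Fin (0 + 1) → Fin n,
        if f 0 = i ∧ f (Fin.last 0) = j then
          ∏ k : Fin 0, M (f k.castSucc) (f k.succ) else 0)
        = ∑ a : Fin n, if a = i ∧ a = j then (1 : ℝ) else 0 := by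
      apply Fintype.sum_equiv (Equiv.funUnique (Fin 1) (Fin n))
      intro f
      simp [Equiv.funUnique, Fin.last]
    rw [pow_zero, e1]
    by_cases h : i = j
    · subst h; simp [Matrix.one_apply]
    · rw [Matrix.one_apply_ne h, Finset.sum_eq_zero]
      intro a _
      rw [if_neg]
      rintro ⟨rfl, rfl⟩; exact h rfl
  | succ r ih =>
    intro i j
    rw [pow_succ, Matrix.mul_apply]
    have key : ∀ f : Fin (r + 2) → Fin n,
        (if f 0 = i ∧ f (Fin.last (r + 1)) = j then
          ∏ k : Fin (r + 1), M (f k.castSucc) (f k.succ) else 0)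
        = (if (f ∘ Fin.castSucc) 0 = i ∧ f (Fin.last (r+1)) = j then
            (∏ k : Fin r, M ((f ∘ Fin.castSucc) k.castSucc) ((f ∘ Fin.castSucc) k.succ))
              * M ((f ∘ Fin.castSucc) (Fin.last r)) (f (Fin.last (r+1))) else 0) := by
      intro f
      have h0 : (f ∘ Fin.castSucc) 0 = f 0 := by simp
      rw [h0, Fin.prod_univ_castSucc]
      congr 1
    have e2 : (∑ f : Fin (r + 1 + 1) → Fin n,
        if f 0 = i ∧ f (Fin.last (r + 1)) = j then
          ∏ k : Fin (r + 1), M (f k.castSucc) (f k.succ) else 0)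
        = ∑ p : Fin n × (Fin (r + 1) → Fin n),
            if p.2 0 = i ∧ p.1 = j then
              (∏ k : Fin r, M (p.2 k.castSucc) (p.2 k.succ)) * M (p.2 (Fin.last r)) p.1
            else 0 := by
      apply Fintype.sum_equiv (Fin.snocEquiv (fun _ => Fin n)).symm
      intro f
      rw [key f]
      have h1 : ((Fin.snocEquiv (fun _ => Fin n)).symm f).2 = f ∘ Fin.castSucc := by
        ext k; simp [Fin.snocEquiv, Fin.init]
      have h2 : ((Fin.snocEquiv (fun _ => Fin n)).symm f).1 = f (Fin.last (r+1)) := by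
        simp [Fin.snocEquiv]
      rw [h1, h2]
    rw [e2, Fintype.sum_prod_type]
    have e3 : ∀ a : Fin n, (∑ g : Fin (r + 1) → Fin n,
        if g 0 = i ∧ a = j then
          (∏ k : Fin r, M (g k.castSucc) (g k.succ)) * M (g (Fin.last r)) a
        else 0)
        = if a = j then (∑ g : Fin (r + 1) → Fin n,
            if g 0 = i then
              (∏ k : Fin r, M (g k.castSucc) (g k.succ)) * M (g (Fin.last r)) a
            else 0) else 0 := by
      intro a
      by_cases h : a = j <;> simp [h]
    simp only [e3]
    rw [Finset.sum_ite_eq' Finset.univ j]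
    simp only [Finset.mem_univ, if_true]
    simp only [ih, Finset.sum_mul, ite_mul, zero_mul]
    rw [Finset.sum_comm]
    apply Finset.sum_congr rfl
    intro g _
    simp only [ite_and]
    by_cases h : g 0 = i
    · simp [h, Finset.sum_ite_eq]
    · simp [h]

lemma trace_pow {n r : ℕ} (M : Matrix (Fin n) (Fin n) ℝ) :
    (M ^ r).trace = ∑ f ∈ Finset.univ.filter
        (fun f : Fin (r + 1) → Fin n => f 0 = f (Fin.last r)),
      ∏ k : Fin r, M (f k.castSucc) (f k.succ) := by
  rw [Matrix.trace]
  simp only [Matrix.diag, pow_entry]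
  rw [Finset.sum_comm, Finset.sum_filter]
  apply Finset.sum_congr rfl
  intro f _
  by_cases h : f 0 = f (Fin.last r)
  · rw [if_pos h]
    have : ∀ i : Fin n, (if f 0 = i ∧ f (Fin.last r) = i then
        ∏ k : Fin r, M (f k.castSucc) (f k.succ) else 0)
        = if f 0 = i then ∏ k : Fin r, M (f k.castSucc) (f k.succ) else 0 := by
      intro i
      by_cases hi : f 0 = i
      · rw [if_pos ⟨hi, h ▸ hi⟩, if_pos hi]
      · rw [if_neg (fun hc => hi hc.1), if_neg hi]
    simp only [this]
    simp [Finset.sum_ite_eq]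
  · rw [if_neg h, Finset.sum_eq_zero]
    intro i _
    rw [if_neg]
    rintro ⟨h1, h2⟩
    exact h (h1.trans h2.symm)

lemma cube_measure {l : ℕ} :
    (volume : Measure (Fin l → ℝ)).restrict (Set.univ.pi fun _ => Set.Icc (0:ℝ) 1)
      = Measure.pi (fun _ : Fin l => volume.restrict (Set.Icc (0:ℝ) 1)) := by
  refine (Measure.pi_eq ?_).symm
  intro s hs
  rw [Measure.restrict_apply (MeasurableSet.univ_pi hs), volume_pi,
    ← Set.pi_inter_distrib, Measure.pi_pi]
  exact Finset.prod_congr rfl fun i _ => (Measure.restrict_apply (hs i)).symm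

lemma law {Ω : Type*} [MeasureSpace Ω] [IsProbabilityMeasure (ℙ : Measure Ω)]
    {n l : ℕ} (x : Fin n → Ω → ℝ) (hxmeas : ∀ i, Measurable (x i))
    (hxindep : iIndepFun x ℙ)
    (hxunif : ∀ i, Measure.map (x i) ℙ = volume.restrict (Set.Icc (0 : ℝ) 1))
    (ι : Fin l → Fin n) (hι : Function.Injective ι) :
    Measure.map (fun ω j => x (ι j) ω) ℙ
      = Measure.pi (fun _ : Fin l => volume.restrict (Set.Icc (0:ℝ) 1)) := by
  have hX : Measurable (fun ω j => x (ι j) ω) :=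
    measurable_pi_lambda _ fun j => hxmeas (ι j)
  refine (Measure.pi_eq ?_).symm
  intro s hs
  classical
  set sets : Fin n → Set ℝ :=
    fun i => ⋂ j ∈ Finset.filter (fun j => ι j = i) Finset.univ, s j with hsets
  have hsets_apply : ∀ j, sets (ι j) = s j := by
    intro j
    rw [hsets]
    have : Finset.filter (fun j' => ι j' = ι j) Finset.univ = {j} := by
      ext j'
      simp [hι.eq_iff]
    simp [this]
  have hsets_meas : ∀ i, MeasurableSet (sets i) := by
    intro i
    exact MeasurableSet.biInter (Finset.countable_toSet _) fun j _ => hs j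
  have hpre : (fun ω j => x (ι j) ω) ⁻¹' Set.univ.pi s
      = ⋂ i ∈ Finset.image ι Finset.univ, x i ⁻¹' sets i := by
    ext ω
    simp only [Set.mem_preimage, Set.mem_univ_pi, Set.mem_iInter, Finset.mem_image,
      Finset.mem_univ, true_and]
    constructor
    · rintro h i ⟨j, rfl⟩
      rw [hsets_apply j]
      exact h j
    · intro h j
      have := h (ι j) ⟨j, rfl⟩
      rwa [hsets_apply j] at this
  rw [Measure.map_apply hX (MeasurableSet.univ_pi hs), hpre,
    hxindep.measure_inter_preimage_eq_mul _ (fun i _ => hsets_meas i),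
    Finset.prod_image (fun a _ b _ h => hι h)]
  refine Finset.prod_congr rfl fun j _ => ?_
  rw [hsets_apply j, ← hxunif (ι j), Measure.map_apply (hxmeas (ι j)) (hs j)]

lemma key_integral {Ω : Type*} [MeasureSpace Ω] [IsProbabilityMeasure (ℙ : Measure Ω)]
    (κ : ℝ → ℝ → ℝ) (hκmeas : Measurable fun p : ℝ × ℝ => κ p.1 p.2)
    {n r l : ℕ} (x : Fin n → Ω → ℝ) (hxmeas : ∀ i, Measurable (x i))
    (hxindep : iIndepFun x ℙ)
    (hxunif : ∀ i, Measure.map (x i) ℙ = volume.restrict (Set.Icc (0 : ℝ) 1))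
    (ι : Fin l → Fin n) (hι : Function.Injective ι) (ψ : Fin (r + 1) → Fin l) :
    ∫ ω, ∏ i : Fin r, κ (x (ι (ψ i.castSucc)) ω) (x (ι (ψ i.succ)) ω) ∂ℙ
      = ∫ t : Fin l → ℝ in Set.univ.pi fun _ => Set.Icc (0:ℝ) 1,
          ∏ i : Fin r, κ (t (ψ i.castSucc)) (t (ψ i.succ)) := by
  have hX : Measurable (fun ω j => x (ι j) ω) :=
    measurable_pi_lambda _ fun j => hxmeas (ι j)
  have hF : Measurable (fun t : Fin l → ℝ =>
      ∏ i : Fin r, κ (t (ψ i.castSucc)) (t (ψ i.succ))) := by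
    apply Finset.measurable_prod
    intro i _
    exact hκmeas.comp (((measurable_pi_apply (ψ i.castSucc)) : Measurable fun t : Fin l → ℝ => t (ψ i.castSucc)).prodMk (measurable_pi_apply (ψ i.succ)))
  have : ∫ ω, ∏ i : Fin r, κ (x (ι (ψ i.castSucc)) ω) (x (ι (ψ i.succ)) ω) ∂ℙ
      = ∫ t, (∏ i : Fin r, κ (t (ψ i.castSucc)) (t (ψ i.succ)))
          ∂(Measure.map (fun ω j => x (ι j) ω) ℙ) := by
    rw [integral_map hX.aemeasurable hF.aestronglyMeasurable]
  rw [this, law x hxmeas hxindep hxunif ι hι, ← cube_measure]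

lemma image_orderEmbOfFin {n l : ℕ} (S : Finset (Fin n)) (h : S.card = l) :
    Finset.image (fun k => S.orderEmbOfFin h k) Finset.univ = S := by
  apply Finset.eq_of_subset_of_card_le
  · intro a ha
    obtain ⟨k, _, rfl⟩ := Finset.mem_image.mp ha
    exact Finset.orderEmbOfFin_mem S h k
  · rw [Finset.card_image_of_injective _ (S.orderEmbOfFin h).injective,
      Finset.card_univ, Fintype.card_fin, h]

lemma card_image_le_of_closed {n r : ℕ} (hr : 0 < r) (φ : Fin (r + 1) → Fin n)
    (hclosed : φ 0 = φ (Fin.last r)) :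
    (Finset.image φ Finset.univ).card ≤ r := by
  have hsub : Finset.image φ Finset.univ
      ⊆ Finset.image (fun k : Fin r => φ k.castSucc) Finset.univ := by
    intro a ha
    obtain ⟨k, _, rfl⟩ := Finset.mem_image.mp ha
    by_cases hk : k = Fin.last r
    · subst hk
      refine Finset.mem_image.mpr ⟨⟨0, hr⟩, Finset.mem_univ _, ?_⟩
      rw [← hclosed]
      congr 1
    · exact Finset.mem_image.mpr ⟨k.castPred hk, Finset.mem_univ _,
        by rw [Fin.castSucc_castPred]⟩
  calc (Finset.image φ Finset.univ).card
      ≤ (Finset.image (fun k : Fin r => φ k.castSucc) Finset.univ).card :=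
        Finset.card_le_card hsub
    _ ≤ (Finset.univ : Finset (Fin r)).card := Finset.card_image_le
    _ = r := by simp

/-- Expansion of `E[tr(A^r)]` for the kernel matrix on `n` i.i.d.
uniform points, grouped by the number `l` of distinct vertices visited:
`E[tr(A^r)] = ∑_{l=1}^{min(r,n)} C(n,l) · J_l`, where `J_l` sums the cube
integrals over all surjective closed walks on `l` labeled vertices. -/
theorem stmt15
    {Ω : Type*} [MeasureSpace Ω] [IsProbabilityMeasure (ℙ : Measure Ω)]
    (κ : ℝ → ℝ → ℝ)
    (hκmeas : Measurable fun p : ℝ × ℝ => κ p.1 p.2)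
    (hκbdd : ∃ C : ℝ, ∀ x y : ℝ, |κ x y| ≤ C)
    (n r : ℕ) (hn : 0 < n) (hr : 0 < r)
    (x : Fin n → Ω → ℝ) (hxmeas : ∀ i, Measurable (x i))
    (hxindep : iIndepFun x ℙ)
    (hxunif : ∀ i, Measure.map (x i) ℙ = volume.restrict (Set.Icc (0 : ℝ) 1))
    (A : Ω → Matrix (Fin n) (Fin n) ℝ)
    (hA : ∀ ω, A ω = Matrix.of fun i j => κ (x i ω) (x j ω))
    (J : ℕ → ℝ)
    (hJ : ∀ l : ℕ,
      J l = ∑ ψ ∈ Finset.univ.filter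
          (fun ψ : Fin (r + 1) → Fin l =>
            ψ 0 = ψ (Fin.last r) ∧ Function.Surjective ψ),
        ∫ t : Fin l → ℝ in Set.univ.pi fun _ => Set.Icc (0 : ℝ) 1,
          ∏ i : Fin r, κ (t (ψ i.castSucc)) (t (ψ i.succ))) :
    ∫ ω : Ω, ((A ω) ^ r).trace ∂ℙ =
      ∑ l ∈ Finset.Icc 1 (min r n), (n.choose l : ℝ) * J l := by
  classical
  obtain ⟨C, hC⟩ := hκbdd
  -- Step A : expand the trace
  have h1 : ∀ ω, ((A ω) ^ r).trace = ∑ φ ∈ Finset.univ.filter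
      (fun φ : Fin (r + 1) → Fin n => φ 0 = φ (Fin.last r)),
      ∏ i : Fin r, κ (x (φ i.castSucc) ω) (x (φ i.succ) ω) := by
    intro ω
    rw [hA ω, trace_pow]
    rfl
  have hmeasφ : ∀ φ : Fin (r + 1) → Fin n, Measurable
      (fun ω => ∏ i : Fin r, κ (x (φ i.castSucc) ω) (x (φ i.succ) ω)) := by
    intro φ
    apply Finset.measurable_prod
    intro i _
    exact hκmeas.comp ((hxmeas _).prodMk (hxmeas _))
  have hint : ∀ φ : Fin (r + 1) → Fin n, Integrable
      (fun ω => ∏ i : Fin r, κ (x (φ i.castSucc) ω) (x (φ i.succ) ω)) ℙ := by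
    intro φ
    refine (integrable_const (C ^ r)).mono' (hmeasφ φ).aestronglyMeasurable
      (ae_of_all _ fun ω => ?_)
    rw [Real.norm_eq_abs, Finset.abs_prod]
    calc (∏ i : Fin r, |κ (x (φ i.castSucc) ω) (x (φ i.succ) ω)|)
        ≤ ∏ _i : Fin r, C :=
          Finset.prod_le_prod (fun i _ => abs_nonneg _) (fun i _ => hC _ _)
      _ = C ^ r := by simp
  rw [show (fun ω : Ω => ((A ω) ^ r).trace) = fun ω => ∑ φ ∈ Finset.univ.filter
      (fun φ : Fin (r + 1) → Fin n => φ 0 = φ (Fin.last r)),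
      ∏ i : Fin r, κ (x (φ i.castSucc) ω) (x (φ i.succ) ω) from funext h1,
    integral_finset_sum _ (fun φ _ => hint φ)]
  -- Step B : regroup by number of distinct vertices
  have hmaps : ∀ φ ∈ Finset.univ.filter
      (fun φ : Fin (r + 1) → Fin n => φ 0 = φ (Fin.last r)),
      (Finset.image φ Finset.univ).card ∈ Finset.Icc 1 (min r n) := by
    intro φ hφ
    rw [Finset.mem_filter] at hφ
    rw [Finset.mem_Icc]
    constructor
    · rw [Nat.one_le_iff_ne_zero, ← Nat.pos_iff_ne_zero, Finset.card_pos]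
      exact ⟨φ 0, Finset.mem_image_of_mem φ (Finset.mem_univ _)⟩
    · exact le_min (card_image_le_of_closed hr φ hφ.2)
        (le_trans (Finset.card_le_card (Finset.subset_univ _)) (by simp))
  rw [← Finset.sum_fiberwise_of_maps_to hmaps]
  apply Finset.sum_congr rfl
  intro l hl
  -- Step C : regroup by the image S
  have hmaps2 : ∀ φ ∈ (Finset.univ.filter
      (fun φ : Fin (r + 1) → Fin n => φ 0 = φ (Fin.last r))).filter
      (fun φ => (Finset.image φ Finset.univ).card = l),
      Finset.image φ Finset.univ ∈ Finset.powersetCard l (Finset.univ : Finset (Fin n)) := by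
    intro φ hφ
    rw [Finset.mem_filter] at hφ
    exact Finset.mem_powersetCard.mpr ⟨Finset.subset_univ _, hφ.2⟩
  rw [← Finset.sum_fiberwise_of_maps_to hmaps2]
  -- Step D : per S, the sum is J l
  have hS : ∀ S ∈ Finset.powersetCard l (Finset.univ : Finset (Fin n)),
      (∑ φ ∈ ((Finset.univ.filter
        (fun φ : Fin (r + 1) → Fin n => φ 0 = φ (Fin.last r))).filter
        (fun φ => (Finset.image φ Finset.univ).card = l)).filter
        (fun φ => Finset.image φ Finset.univ = S),
        ∫ ω, ∏ i : Fin r, κ (x (φ i.castSucc) ω) (x (φ i.succ) ω) ∂ℙ)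
      = J l := by
    intro S hSmem
    have hScard : S.card = l := (Finset.mem_powersetCard.mp hSmem).2
    rw [hJ l]
    set e := S.orderIsoOfFin hScard with he
    have hcoe : ∀ b : Fin l, (e b : Fin n) = S.orderEmbOfFin hScard b := fun b => rfl
    have hιinj : Function.Injective (fun k => (S.orderEmbOfFin hScard k : Fin n)) :=
      (S.orderEmbOfFin hScard).injective
    refine Finset.sum_bij'
      (i := fun φ hφ => fun k => e.symm ⟨φ k, by
        simp only [Finset.mem_filter] at hφ
        rw [← hφ.2]
        exact Finset.mem_image_of_mem φ (Finset.mem_univ k)⟩)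
      (j := fun ψ hψ => fun k => (S.orderEmbOfFin hScard (ψ k) : Fin n))
      ?_ ?_ ?_ ?_ ?_
    · -- hi : i φ ∈ Ψ_l
      intro φ hφ
      simp only [Finset.mem_filter] at hφ ⊢
      refine ⟨Finset.mem_univ _, ?_, ?_⟩
      · exact congrArg e.symm (Subtype.ext hφ.1.1.2)
      · intro b
        have hbmem : (S.orderEmbOfFin hScard b : Fin n) ∈ Finset.image φ Finset.univ := by
          rw [hφ.2]; exact Finset.orderEmbOfFin_mem S hScard b
        obtain ⟨k, _, hk⟩ := Finset.mem_image.mp hbmem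
        exact ⟨k, (OrderIso.symm_apply_eq e).mpr (Subtype.ext (hk.trans (hcoe b).symm))⟩
    · -- hj : j ψ ∈ fiber
      intro ψ hψ
      simp only [Finset.mem_filter] at hψ ⊢
      have himg : Finset.image (fun k => (S.orderEmbOfFin hScard (ψ k) : Fin n))
          Finset.univ = S := by
        have : Finset.image (fun k => (S.orderEmbOfFin hScard (ψ k) : Fin n)) Finset.univ
            = Finset.image (fun k => (S.orderEmbOfFin hScard k : Fin n))
              (Finset.image ψ Finset.univ) := by
          rw [Finset.image_image]
          rfl
        rw [this, Finset.image_univ_of_surjective hψ.2.2, image_orderEmbOfFin]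
      refine ⟨⟨⟨Finset.mem_univ _, ?_⟩, ?_⟩, himg⟩
      · rw [hψ.2.1]
      · rw [himg, hScard]
    · -- left_inv : j (i φ) = φ
      intro φ hφ
      funext k
      show (S.orderEmbOfFin hScard (e.symm ⟨φ k, _⟩) : Fin n) = φ k
      rw [← hcoe, OrderIso.apply_symm_apply]
    · -- right_inv : i (j ψ) = ψ
      intro ψ hψ
      funext k
      show e.symm ⟨(S.orderEmbOfFin hScard (ψ k) : Fin n),
        Finset.orderEmbOfFin_mem S hScard (ψ k)⟩ = ψ k
      exact (OrderIso.symm_apply_eq e).mpr (Subtype.ext (hcoe (ψ k)).symm)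
    · -- values
      intro φ hφ
      have hmem : ∀ k, φ k ∈ S := by
        intro k
        simp only [Finset.mem_filter] at hφ
        rw [← hφ.2]
        exact Finset.mem_image_of_mem φ (Finset.mem_univ k)
      refine Eq.trans ?_ (key_integral κ hκmeas x hxmeas hxindep hxunif _ hιinj
        (fun k => e.symm ⟨φ k, hmem k⟩))
      congr 1
      funext ω
      refine Finset.prod_congr rfl fun i _ => ?_
      have h2 : ∀ k : Fin (r + 1), x (φ k) ω
          = x ((S.orderEmbOfFin hScard (e.symm ⟨φ k, hmem k⟩) : Fin n)) ω := by
        intro k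
        rw [← hcoe, OrderIso.apply_symm_apply]
      exact congrArg₂ κ (h2 i.castSucc) (h2 i.succ)
  rw [Finset.sum_congr rfl hS, Finset.sum_const, Finset.card_powersetCard,
    Finset.card_univ, Fintype.card_fin, nsmul_eq_mul]
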